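/- Let p be an odd prime and 0 ≤ u < v. Let J(u,v) be the set of nonnegative integers a whose base-p digits satisfy α_i(a) ≤ 1 and α_i(a)+α_{i+1}(a)+α_{i+2}(a) ≤ 2 for all i, and α_i(a) = 0 for i < u or i ≥ v−2. Then J(u,v+3) = J(u,v+2) ∪ (p^v + J(u,v+1)) ∪ (p^v + p^{v-1} + J(u,v)), a disjoint union. -/

import Mathlib

/-- `α_i(a)`: the `i`-th digit in the base-`p` expansion of `a`. -/
def alphaDigit (p a i : ℕ) : ℕ := a / p ^ i % p

/-- `J(u,v)`: nonnegative integers `a` with `α_i(a) ≤ 1` and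
`α_i(a)+α_{i+1}(a)+α_{i+2}(a) ≤ 2` for all `i`, and `α_i(a) = 0` for `i < u` or `i ≥ v-2`. -/
def Jset (p u v : ℕ) : Set ℕ :=
  {a | (∀ i, alphaDigit p a i ≤ 1) ∧
    (∀ i, alphaDigit p a i + alphaDigit p a (i + 1) + alphaDigit p a (i + 2) ≤ 2) ∧
    ∀ i, (i < u ∨ v - 2 ≤ i) → alphaDigit p a i = 0}

private lemma digit_lt_pow {p : ℕ} (hp : 2 ≤ p) {a k : ℕ} (h : a < p ^ k) {i : ℕ} (hi : k ≤ i) :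
    alphaDigit p a i = 0 := by
  have hlt : a < p ^ i := lt_of_lt_of_le h (Nat.pow_le_pow_right (by omega) hi)
  simp [alphaDigit, Nat.div_eq_of_lt hlt]

private lemma lt_pow_of_digits {p : ℕ} (hp : 2 ≤ p) {a k : ℕ}
    (h : ∀ i, k ≤ i → alphaDigit p a i = 0) : a < p ^ k := by
  by_contra hle
  push_neg at hle
  have ha : a ≠ 0 := by
    have : 1 ≤ p ^ k := Nat.one_le_pow _ _ (by omega)
    omega
  have hkL : k ≤ Nat.log p a := (Nat.le_log_iff_pow_le (by omega) ha).mpr hle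
  have h1 : p ^ Nat.log p a ≤ a := Nat.pow_log_le_self p ha
  have h2 : a < p ^ (Nat.log p a + 1) := Nat.lt_pow_succ_log_self (by omega) a
  have h0 := h _ hkL
  unfold alphaDigit at h0
  have hd1 : 1 ≤ a / p ^ Nat.log p a := (Nat.one_le_div_iff (by positivity)).mpr h1
  have hd2 : a / p ^ Nat.log p a < p := by
    rw [Nat.div_lt_iff_lt_mul (by positivity)]
    have e1 : p ^ (Nat.log p a + 1) = p ^ Nat.log p a * p := pow_succ p _
    have e2 : p ^ Nat.log p a * p = p * p ^ Nat.log p a := Nat.mul_comm _ _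
    omega
  rw [Nat.mod_eq_of_lt hd2] at h0
  omega

private lemma digit_add {p : ℕ} (hp : 2 ≤ p) {k q r : ℕ} (hr : r < p ^ k) (i : ℕ) :
    alphaDigit p (p ^ k * q + r) i =
      if i < k then alphaDigit p r i else alphaDigit p q (i - k) := by
  unfold alphaDigit
  split_ifs with h
  · have hk : p ^ k * q = p ^ i * (p * (p ^ (k - i - 1) * q)) := by
      rw [← mul_assoc, ← mul_assoc, ← pow_succ, ← pow_add]
      congr 2
      omega
    rw [hk, Nat.mul_add_div (by positivity), Nat.mul_add_mod]
  · have hk : p ^ i = p ^ k * p ^ (i - k) := by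
      rw [← pow_add]; congr 1; omega
    rw [hk, ← Nat.div_div_eq_div_mul, Nat.mul_add_div (by positivity),
      Nat.div_eq_of_lt hr, add_zero]

private lemma digit_pow_add {p : ℕ} (hp : 2 ≤ p) {k r : ℕ} (hr : r < p ^ k) (j : ℕ) :
    alphaDigit p (p ^ k + r) j =
      if j < k then alphaDigit p r j else if j = k then 1 else 0 := by
  have h := digit_add hp hr (q := 1) j
  rw [mul_one] at h
  rw [h]
  split_ifs with h1 h2
  · rfl
  · subst h2
    show 1 / p ^ (j - j) % p = 1
    rw [Nat.sub_self, pow_zero, Nat.div_one, Nat.mod_eq_of_lt (by omega)]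
  · show 1 / p ^ (j - k) % p = 0
    rw [Nat.div_eq_of_lt, Nat.zero_mod]
    calc 1 < p := by omega
      _ ≤ p ^ (j - k) := Nat.le_self_pow (by omega) p

private lemma digit_two_pow_add {p : ℕ} (hp : 2 ≤ p) {k r : ℕ} (hr : r < p ^ k) (j : ℕ) :
    alphaDigit p (p ^ (k + 1) + p ^ k + r) j =
      if j < k then alphaDigit p r j else if j = k ∨ j = k + 1 then 1 else 0 := by
  have heq : p ^ (k + 1) + p ^ k + r = p ^ k * (p + 1) + r := by
    rw [Nat.mul_add, mul_one, ← pow_succ]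
  rw [heq, digit_add hp hr]
  split_ifs with h1 h2
  · rfl
  · rcases h2 with h2 | h2
    · subst h2
      show (p + 1) / p ^ (j - j) % p = 1
      rw [Nat.sub_self, pow_zero, Nat.div_one, Nat.add_mod_left, Nat.mod_eq_of_lt (by omega)]
    · subst h2
      show (p + 1) / p ^ (k + 1 - k) % p = 1
      rw [show k + 1 - k = 1 by omega, pow_one, show p + 1 = 1 + p by ring,
        Nat.add_div_right _ (by omega), Nat.div_eq_of_lt (by omega),
        Nat.mod_eq_of_lt (by omega)]
  · show (p + 1) / p ^ (j - k) % p = 0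
    rw [Nat.div_eq_of_lt, Nat.zero_mod]
    calc p + 1 < p * p := by nlinarith
      _ = p ^ 2 := (sq p).symm
      _ ≤ p ^ (j - k) := Nat.pow_le_pow_right (by omega) (by omega)

/-- For `0 ≤ u < v`:
`J(u,v+3) = J(u,v+2) ∪ (p^v + J(u,v+1)) ∪ (p^v + p^{v-1} + J(u,v))`, a disjoint union. -/
theorem stmt17 (p u v : ℕ) (hp : p.Prime) (hodd : Odd p) (huv : u < v) :
    Jset p u (v + 3) =
        Jset p u (v + 2) ∪ ((fun a => p ^ v + a) '' Jset p u (v + 1)) ∪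
          ((fun a => p ^ v + p ^ (v - 1) + a) '' Jset p u v) ∧
      Disjoint (Jset p u (v + 2)) ((fun a => p ^ v + a) '' Jset p u (v + 1)) ∧
      Disjoint (Jset p u (v + 2)) ((fun a => p ^ v + p ^ (v - 1) + a) '' Jset p u v) ∧
      Disjoint ((fun a => p ^ v + a) '' Jset p u (v + 1))
        ((fun a => p ^ v + p ^ (v - 1) + a) '' Jset p u v) := by
  have hp2 : 2 ≤ p := hp.two_le
  have hv1 : 1 ≤ v := by omega
  -- digits of elements of the second image
  have dig2 : ∀ a ∈ (fun a => p ^ v + a) '' Jset p u (v + 1),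
      alphaDigit p a v = 1 ∧ alphaDigit p a (v - 1) = 0 := by
    rintro a ⟨r, hrm, hre⟩
    obtain ⟨h1, h2, h3⟩ := hrm
    have hre' : p ^ v + r = a := hre
    subst hre'
    have hr0 : ∀ j, v - 1 ≤ j → alphaDigit p r j = 0 := fun j hj => h3 j (Or.inr (by omega))
    have hrlt : r < p ^ v :=
      lt_of_lt_of_le (lt_pow_of_digits hp2 hr0) (Nat.pow_le_pow_right (by omega) (by omega))
    have hD := digit_pow_add hp2 hrlt
    constructor
    · rw [hD v, if_neg (by omega), if_pos rfl]
    · rw [hD (v - 1), if_pos (by omega)]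
      exact hr0 (v - 1) le_rfl
  -- digits of elements of the third image
  have dig3 : ∀ a ∈ (fun a => p ^ v + p ^ (v - 1) + a) '' Jset p u v,
      alphaDigit p a v = 1 ∧ alphaDigit p a (v - 1) = 1 := by
    rintro a ⟨r, hrm, hre⟩
    obtain ⟨h1, h2, h3⟩ := hrm
    have hre' : p ^ v + p ^ (v - 1) + r = a := hre
    subst hre'
    have hr0 : ∀ j, v - 2 ≤ j → alphaDigit p r j = 0 := fun j hj => h3 j (Or.inr hj)
    have hrlt : r < p ^ (v - 1) :=
      lt_of_lt_of_le (lt_pow_of_digits hp2 hr0) (Nat.pow_le_pow_right (by omega) (by omega))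
    have hkv : v - 1 + 1 = v := by omega
    have hD : ∀ j, alphaDigit p (p ^ v + p ^ (v - 1) + r) j =
        if j < v - 1 then alphaDigit p r j else if j = v - 1 ∨ j = v then 1 else 0 := by
      intro j
      have h := digit_two_pow_add hp2 hrlt j
      rw [hkv] at h
      exact h
    constructor
    · rw [hD v, if_neg (by omega), if_pos (Or.inr rfl)]
    · rw [hD (v - 1), if_neg (by omega), if_pos (Or.inl rfl)]
  have dig1 : ∀ a ∈ Jset p u (v + 2), alphaDigit p a v = 0 := by
    rintro a ⟨h1, h2, h3⟩
    exact h3 v (Or.inr (by omega))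
  refine ⟨?_, ?_, ?_, ?_⟩
  · apply Set.Subset.antisymm
    · intro a ha
      obtain ⟨h1, h2, h3⟩ := ha
      have haz : ∀ i, v + 1 ≤ i → alphaDigit p a i = 0 := fun i hi => h3 i (Or.inr (by omega))
      have halt : a < p ^ (v + 1) := lt_pow_of_digits hp2 haz
      have hdv : alphaDigit p a v = 0 ∨ alphaDigit p a v = 1 := by have := h1 v; omega
      rcases hdv with hdv | hdv
      · refine Or.inl (Or.inl ⟨h1, h2, fun i hi => ?_⟩)
        rcases hi with hi | hi
        · exact h3 i (Or.inl hi)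
        · rcases Nat.eq_or_lt_of_le (show v ≤ i by omega) with he | he
          · rw [← he]; exact hdv
          · exact h3 i (Or.inr (by omega))
      · have hdvm : alphaDigit p a (v - 1) = 0 ∨ alphaDigit p a (v - 1) = 1 := by
          have := h1 (v - 1); omega
        rcases hdvm with hdvm | hdvm
        · -- a = p^v + (a % p^v)
          set r := a % p ^ v with hrdef
          have hpv : 0 < p ^ v := by positivity
          have hrlt : r < p ^ v := Nat.mod_lt _ hpv
          have hq : a / p ^ v = 1 := by
            have hlt : a / p ^ v < p := by
              rw [Nat.div_lt_iff_lt_mul hpv]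
              have e1 : p ^ (v + 1) = p ^ v * p := pow_succ p _
              have e2 : p ^ v * p = p * p ^ v := Nat.mul_comm _ _
              omega
            have h1' : a / p ^ v % p = 1 := hdv
            rwa [Nat.mod_eq_of_lt hlt] at h1'
          have heq : a = p ^ v + r := by
            have hdm := Nat.div_add_mod a (p ^ v)
            rw [hq, mul_one] at hdm
            omega
          have hD : ∀ j, alphaDigit p a j =
              if j < v then alphaDigit p r j else if j = v then 1 else 0 := by
            intro j; rw [heq]; exact digit_pow_add hp2 hrlt j
          have hrd : ∀ j, alphaDigit p r j = if j < v then alphaDigit p a j else 0 := by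
            intro j
            by_cases hj : j < v
            · rw [if_pos hj]
              have h := hD j
              rw [if_pos hj] at h
              exact h.symm
            · rw [if_neg hj]
              exact digit_lt_pow hp2 hrlt (by omega)
          have hler : ∀ j, alphaDigit p r j ≤ alphaDigit p a j := by
            intro j
            rw [hrd]
            split_ifs
            · exact le_rfl
            · exact Nat.zero_le _
          refine Or.inl (Or.inr ⟨r, ⟨?_, ?_, ?_⟩, heq.symm⟩)
          · intro i
            exact le_trans (hler i) (h1 i)
          · intro i
            have t0 := h2 i
            have t1 := hler i; have t2 := hler (i + 1); have t3 := hler (i + 2)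
            omega
          · intro i hi
            rw [hrd]
            split_ifs with hj
            · rcases hi with hi | hi
              · exact h3 i (Or.inl hi)
              · have he : i = v - 1 := by omega
                rw [he]; exact hdvm
            · rfl
        · -- a = p^v + p^(v-1) + (a % p^(v-1))
          set r := a % p ^ (v - 1) with hrdef
          have hpk : 0 < p ^ (v - 1) := by positivity
          have hrlt : r < p ^ (v - 1) := Nat.mod_lt _ hpk
          have hkv : v - 1 + 1 = v := by omega
          have hq : a / p ^ (v - 1) = p + 1 := by
            have hqp : a / p ^ (v - 1) / p = a / p ^ v := by
              rw [Nat.div_div_eq_div_mul, ← pow_succ, hkv]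
            have hlt : a / p ^ v < p := by
              rw [Nat.div_lt_iff_lt_mul (by positivity)]
              have e1 : p ^ (v + 1) = p ^ v * p := pow_succ p _
              have e2 : p ^ v * p = p * p ^ v := Nat.mul_comm _ _
              omega
            have h1' : a / p ^ v % p = 1 := hdv
            rw [Nat.mod_eq_of_lt hlt] at h1'
            have h2' : a / p ^ (v - 1) % p = 1 := hdvm
            have hdm := Nat.div_add_mod (a / p ^ (v - 1)) p
            rw [h2', hqp, h1'] at hdm
            omega
          have heq : a = p ^ v + p ^ (v - 1) + r := by
            have hdm := Nat.div_add_mod a (p ^ (v - 1))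
            rw [hq] at hdm
            have hpow : p ^ (v - 1) * (p + 1) = p ^ v + p ^ (v - 1) := by
              rw [Nat.mul_add, mul_one, ← pow_succ, hkv]
            omega
          have hD : ∀ j, alphaDigit p a j =
              if j < v - 1 then alphaDigit p r j else if j = v - 1 ∨ j = v then 1 else 0 := by
            intro j
            rw [heq]
            have h := digit_two_pow_add hp2 hrlt j
            rw [hkv] at h
            exact h
          have hrd : ∀ j, alphaDigit p r j = if j < v - 1 then alphaDigit p a j else 0 := by
            intro j
            by_cases hj : j < v - 1
            · rw [if_pos hj]
              have h := hD j
              rw [if_pos hj] at h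
              exact h.symm
            · rw [if_neg hj]
              exact digit_lt_pow hp2 hrlt (by omega)
          have hler : ∀ j, alphaDigit p r j ≤ alphaDigit p a j := by
            intro j
            rw [hrd]
            split_ifs
            · exact le_rfl
            · exact Nat.zero_le _
          refine Or.inr ⟨r, ⟨?_, ?_, ?_⟩, heq.symm⟩
          · intro i
            exact le_trans (hler i) (h1 i)
          · intro i
            have t0 := h2 i
            have t1 := hler i; have t2 := hler (i + 1); have t3 := hler (i + 2)
            omega
          · intro i hi
            rw [hrd]
            split_ifs with hj
            · rcases hi with hi | hi
              · exact h3 i (Or.inl hi)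
              · have he : i = v - 2 := by omega
                have e1 : v - 2 + 1 = v - 1 := by omega
                have e2 : v - 2 + 2 = v := by omega
                have ht := h2 (v - 2)
                rw [e1, e2] at ht
                rw [he]
                omega
            · rfl
    · intro a ha
      rcases ha with (ha | ha) | ha
      · obtain ⟨h1, h2, h3⟩ := ha
        refine ⟨h1, h2, fun i hi => h3 i ?_⟩
        rcases hi with hi | hi
        · exact Or.inl hi
        · exact Or.inr (by omega)
      · obtain ⟨r, hrm, hre⟩ := ha
        obtain ⟨h1, h2, h3⟩ := hrm
        have hre' : p ^ v + r = a := hre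
        subst hre'
        have hr0 : ∀ j, v - 1 ≤ j → alphaDigit p r j = 0 := fun j hj => h3 j (Or.inr (by omega))
        have hrlt : r < p ^ v :=
          lt_of_lt_of_le (lt_pow_of_digits hp2 hr0) (Nat.pow_le_pow_right (by omega) (by omega))
        have hD := digit_pow_add hp2 hrlt
        refine ⟨?_, ?_, ?_⟩
        · intro j
          rw [hD j]
          split_ifs
          · exact h1 j
          · exact le_rfl
          · exact Nat.zero_le 1
        · intro i
          rw [hD i, hD (i + 1), hD (i + 2)]
          have t0 := h1 i; have t1 := h1 (i + 1); have t2 := h1 (i + 2); have t3 := h2 i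
          by_cases hB : i + 2 = v
          · have h01 : alphaDigit p r (i + 1) = 0 := hr0 (i + 1) (by omega)
            split_ifs <;> omega
          by_cases hC : i + 1 = v
          · have h00 : alphaDigit p r i = 0 := hr0 i (by omega)
            split_ifs <;> omega
          · split_ifs <;> omega
        · intro i hi
          rw [hD i]
          split_ifs with hc1 hc2
          · rcases hi with hi | hi
            · exact h3 i (Or.inl hi)
            · omega
          · omega
          · rfl
      · obtain ⟨r, hrm, hre⟩ := ha
        obtain ⟨h1, h2, h3⟩ := hrm
        have hre' : p ^ v + p ^ (v - 1) + r = a := hre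
        subst hre'
        have hr0 : ∀ j, v - 2 ≤ j → alphaDigit p r j = 0 := fun j hj => h3 j (Or.inr hj)
        have hrlt : r < p ^ (v - 1) :=
          lt_of_lt_of_le (lt_pow_of_digits hp2 hr0) (Nat.pow_le_pow_right (by omega) (by omega))
        have hkv : v - 1 + 1 = v := by omega
        have hD : ∀ j, alphaDigit p (p ^ v + p ^ (v - 1) + r) j =
            if j < v - 1 then alphaDigit p r j else if j = v - 1 ∨ j = v then 1 else 0 := by
          intro j
          have h := digit_two_pow_add hp2 hrlt j
          rw [hkv] at h
          exact h
        refine ⟨?_, ?_, ?_⟩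
        · intro j
          rw [hD j]
          split_ifs
          · exact h1 j
          · exact le_rfl
          · exact Nat.zero_le 1
        · intro i
          rw [hD i, hD (i + 1), hD (i + 2)]
          have t0 := h1 i; have t1 := h1 (i + 1); have t2 := h1 (i + 2); have t3 := h2 i
          by_cases hB : i + 2 = v - 1
          · have h01 : alphaDigit p r (i + 1) = 0 := hr0 (i + 1) (by omega)
            split_ifs <;> omega
          by_cases hC : i + 1 = v - 1
          · have h00 : alphaDigit p r i = 0 := hr0 i (by omega)
            split_ifs <;> omega
          · split_ifs <;> omega
        · intro i hi
          rw [hD i]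
          split_ifs with hc1 hc2
          · rcases hi with hi | hi
            · exact h3 i (Or.inl hi)
            · omega
          · omega
          · rfl
  · rw [Set.disjoint_left]
    intro a ha hb
    have h1 := dig1 a ha
    have h2 := (dig2 a hb).1
    omega
  · rw [Set.disjoint_left]
    intro a ha hb
    have h1 := dig1 a ha
    have h2 := (dig3 a hb).1
    omega
  · rw [Set.disjoint_left]
    intro a ha hb
    have h1 := (dig2 a ha).2
    have h2 := (dig3 a hb).2
    omega
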